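/- Let A ⊆ D_{αΔ}(S,P) contain D_Δ(S,P), and define Cov_A(S[b,d]) as the union of all intervals [a,c] such that there is a monotone path from (a,b) to (c,d) in A. Then Cov_P(S[b,d], Δ) ⊆ Cov_A(S[b,d]) ⊆ Cov_P(S[b,d], αΔ), where Cov_P(Q, r) is the union of all intervals [s,t] ⊆ [0,1] with d_F(P[s,t], Q) ≤ r. -/

import Mathlib

open Set

/-- The continuous Fréchet distance between two curves parametrized over `[0,1]`:
the infimum over nondecreasing surjective reparametrizations `f, g` of `[0,1]`
of the maximal pointwise distance. -/
noncomputable def frechetDist {E : Type*} [SeminormedAddCommGroup E] (P Q : ℝ → E) : ℝ :=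
  sInf {r : ℝ | ∃ f g : ℝ → ℝ,
    MonotoneOn f (Icc 0 1) ∧ MonotoneOn g (Icc 0 1) ∧
    f '' Icc 0 1 = Icc 0 1 ∧ g '' Icc 0 1 = Icc 0 1 ∧
    ∀ t ∈ Icc (0:ℝ) 1, ‖P (f t) - Q (g t)‖ ≤ r}

/-- The subcurve `P[s,t]`, reparametrized over `[0,1]`. -/
def subcurve {E : Type*} (P : ℝ → E) (s t : ℝ) : ℝ → E := fun u => P (s + u * (t - s))

/-- The `Δ`-coverage of a curve `Q` on `P`: the union of all parameter intervals `[s,t] ⊆ [0,1]`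
such that the subcurve `P[s,t]` has Fréchet distance at most `Δ` to `Q`. -/
def Cov {E : Type*} [SeminormedAddCommGroup E] (P Q : ℝ → E) (Δ : ℝ) : Set ℝ :=
  ⋃ (s : ℝ) (t : ℝ) (_ : 0 ≤ s) (_ : s ≤ t) (_ : t ≤ 1)
    (_ : frechetDist (subcurve P s t) Q ≤ Δ), Icc s t

/-- `P` is a polygonal curve of complexity (number of vertices) at most `n`. -/
def IsPolygonal {E : Type*} [SeminormedAddCommGroup E] [NormedSpace ℝ E]
    (P : ℝ → E) (n : ℕ) : Prop :=
  ∃ m : ℕ, m + 1 ≤ n ∧ ∃ t : Fin (m + 1) → ℝ,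
    t 0 = 0 ∧ t (Fin.last m) = 1 ∧ Monotone t ∧
    ∀ i : Fin m, ∀ u ∈ Icc (t i.castSucc) (t i.succ),
      P u = P (t i.castSucc) +
        ((u - t i.castSucc) / (t i.succ - t i.castSucc)) • (P (t i.succ) - P (t i.castSucc))

/-- The `Δ`-free space of `S` and `P` (the first coordinate is the parameter of `P`). -/
def freeSpace {E : Type*} [SeminormedAddCommGroup E] (S P : ℝ → E) (Δ : ℝ) : Set (ℝ × ℝ) :=
  {p : ℝ × ℝ | p.1 ∈ Icc (0:ℝ) 1 ∧ p.2 ∈ Icc (0:ℝ) 1 ∧ ‖P p.1 - S p.2‖ ≤ Δ}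

/-- A path inside `F` from `p` to `q` that is monotone nondecreasing in both coordinates. -/
def IsMonotonePathIn (F : Set (ℝ × ℝ)) (p q : ℝ × ℝ) : Prop :=
  ∃ γ : ℝ → ℝ × ℝ, ContinuousOn γ (Icc 0 1) ∧ γ 0 = p ∧ γ 1 = q ∧
    MonotoneOn (fun u => (γ u).1) (Icc 0 1) ∧ MonotoneOn (fun u => (γ u).2) (Icc 0 1) ∧
    ∀ u ∈ Icc (0:ℝ) 1, γ u ∈ F

/-- `Cov_A(S[b,d])`: the union of all intervals `[a,c]` such that there is a monotone path
from `(a,b)` to `(c,d)` in `A`. -/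
def CovA (A : Set (ℝ × ℝ)) (b d : ℝ) : Set ℝ :=
  ⋃ (a : ℝ) (c : ℝ) (_ : a ≤ c) (_ : IsMonotonePathIn A (a, b) (c, d)), Icc a c


open scoped NNReal
lemma contOn_union {X : Type*} [TopologicalSpace X] {f : ℝ → X} {s t : Set ℝ}
    (hs : IsClosed s) (ht : IsClosed t)
    (hfs : ContinuousOn f s) (hft : ContinuousOn f t) : ContinuousOn f (s ∪ t) := by
  intro x hx
  have h1 : ContinuousWithinAt f s x := by
    by_cases hxs : x ∈ s
    · exact hfs x hxs
    · exact continuousWithinAt_of_notMem_closure (by rwa [hs.closure_eq])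
  have h2 : ContinuousWithinAt f t x := by
    by_cases hxt : x ∈ t
    · exact hft x hxt
    · exact continuousWithinAt_of_notMem_closure (by rwa [ht.closure_eq])
  exact h1.union h2

lemma monoOn_image_continuousOn {f : ℝ → ℝ} (hf : MonotoneOn f (Icc 0 1))
    (him : f '' Icc 0 1 = Icc 0 1) : ContinuousOn f (Icc 0 1) := by
  have hmaps : MapsTo f (Icc (0:ℝ) 1) (Icc (0:ℝ) 1) := by
    intro x hx; rw [← him]; exact mem_image_of_mem f hx
  set g : Icc (0:ℝ) 1 → Icc (0:ℝ) 1 := fun x => ⟨f x, hmaps x.2⟩ with hg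
  have hgm : Monotone g := fun x y hxy => hf x.2 y.2 hxy
  have hgs : Function.Surjective g := by
    intro y
    have hy : (y : ℝ) ∈ f '' Icc 0 1 := by rw [him]; exact y.2
    obtain ⟨x, hx, hfx⟩ := hy
    exact ⟨⟨x, hx⟩, Subtype.ext hfx⟩
  have hcg : Continuous g := hgm.continuous_of_surjective hgs
  rw [continuousOn_iff_continuous_restrict]
  exact continuous_subtype_val.comp hcg

lemma mono_img_endpoints {f : ℝ → ℝ} (hm : MonotoneOn f (Icc 0 1))
    (him : f '' Icc 0 1 = Icc 0 1) : f 0 = 0 ∧ f 1 = 1 := by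
  have h0m : (0:ℝ) ∈ Icc (0:ℝ) 1 := left_mem_Icc.mpr zero_le_one
  have h1m : (1:ℝ) ∈ Icc (0:ℝ) 1 := right_mem_Icc.mpr zero_le_one
  have hf0 : f 0 ∈ Icc (0:ℝ) 1 := by rw [← him]; exact mem_image_of_mem f h0m
  have hf1 : f 1 ∈ Icc (0:ℝ) 1 := by rw [← him]; exact mem_image_of_mem f h1m
  have h0 : (0:ℝ) ∈ f '' Icc 0 1 := by rw [him]; exact h0m
  have h1 : (1:ℝ) ∈ f '' Icc 0 1 := by rw [him]; exact h1m
  obtain ⟨u, hu, hu0⟩ := h0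
  obtain ⟨v, hv, hv1⟩ := h1
  constructor
  · exact le_antisymm (le_of_le_of_eq (hm h0m hu hu.1) hu0) hf0.1
  · exact le_antisymm hf1.2 (le_of_eq_of_le hv1.symm (hm hv h1m hv.2))

open Filter Topology

lemma IsPolygonal.continuousOn {E : Type*} [SeminormedAddCommGroup E] [NormedSpace ℝ E]
    {P : ℝ → E} {n : ℕ} (hP : IsPolygonal P n) : ContinuousOn P (Icc 0 1) := by
  obtain ⟨m, -, t, ht0, ht1, htm, hseg⟩ := hP
  have key : ∀ k : ℕ, (hk : k < m + 1) → ContinuousOn P (Icc (t 0) (t ⟨k, hk⟩)) := by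
    intro k
    induction k with
    | zero =>
      intro hk
      have h00 : (⟨0, hk⟩ : Fin (m+1)) = 0 := rfl
      rw [h00, Icc_self]
      exact continuousOn_singleton _ _
    | succ k ih =>
      intro hk
      have hk' : k < m + 1 := Nat.lt_of_succ_lt hk
      have hkm : k < m := Nat.succ_lt_succ_iff.mp hk
      have hseg' := hseg ⟨k, hkm⟩
      have hcs : (Fin.castSucc ⟨k, hkm⟩ : Fin (m+1)) = ⟨k, hk'⟩ := rfl
      have hsc : (Fin.succ ⟨k, hkm⟩ : Fin (m+1)) = ⟨k + 1, hk⟩ := rfl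
      rw [hcs, hsc] at hseg'
      set a := t ⟨k, hk'⟩ with ha
      set c := t ⟨k+1, hk⟩ with hc
      have hac : a ≤ c := htm (by simp [Fin.mk_le_mk])
      have h0a : t 0 ≤ a := htm (Fin.zero_le _)
      have hcont2 : ContinuousOn P (Icc a c) := by
        apply ContinuousOn.congr
          (f := fun u => P a + ((u - a) / (c - a)) • (P c - P a))
        · apply Continuous.continuousOn
          have : Continuous fun u : ℝ => (u - a) / (c - a) :=
            (continuous_id.sub continuous_const).div_const _
          exact continuous_const.add (this.smul continuous_const)
        · intro u hu
          exact hseg' u hu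
      rw [← Icc_union_Icc_eq_Icc h0a hac]
      exact contOn_union isClosed_Icc isClosed_Icc (ih hk') hcont2
  have hfin := key m (Nat.lt_succ_self m)
  have hlast : (⟨m, Nat.lt_succ_self m⟩ : Fin (m+1)) = Fin.last m := rfl
  rwa [ht0, hlast, ht1] at hfin

lemma subcurve_contOn {E : Type*} [SeminormedAddCommGroup E]
    {P : ℝ → E} (hP : ContinuousOn P (Icc 0 1))
    {s t : ℝ} (h0 : 0 ≤ s) (hst : s ≤ t) (h1 : t ≤ 1) :
    ContinuousOn (subcurve P s t) (Icc 0 1) := by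
  have hmaps : MapsTo (fun u : ℝ => s + u * (t - s)) (Icc 0 1) (Icc 0 1) := by
    intro u hu
    have h1' : s + u * (t - s) ∈ Icc (0:ℝ) 1 := by
      rw [mem_Icc]; constructor <;> nlinarith [hu.1, hu.2]
    exact h1'
  exact hP.comp ((continuous_const.add (continuous_id.mul continuous_const)).continuousOn) hmaps

lemma fset_bddBelow {E : Type*} [SeminormedAddCommGroup E] (P Q : ℝ → E) :
    BddBelow {r : ℝ | ∃ f g : ℝ → ℝ,
      MonotoneOn f (Icc 0 1) ∧ MonotoneOn g (Icc 0 1) ∧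
      f '' Icc 0 1 = Icc 0 1 ∧ g '' Icc 0 1 = Icc 0 1 ∧
      ∀ t ∈ Icc (0:ℝ) 1, ‖P (f t) - Q (g t)‖ ≤ r} := by
  refine ⟨0, fun r hr => ?_⟩
  obtain ⟨f, g, -, -, -, -, hfg⟩ := hr
  exact (norm_nonneg _).trans (hfg 0 (left_mem_Icc.mpr zero_le_one))

lemma fset_nonempty {E : Type*} [SeminormedAddCommGroup E] {P Q : ℝ → E}
    (hP : ContinuousOn P (Icc 0 1)) (hQ : ContinuousOn Q (Icc 0 1)) :
    {r : ℝ | ∃ f g : ℝ → ℝ,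
      MonotoneOn f (Icc 0 1) ∧ MonotoneOn g (Icc 0 1) ∧
      f '' Icc 0 1 = Icc 0 1 ∧ g '' Icc 0 1 = Icc 0 1 ∧
      ∀ t ∈ Icc (0:ℝ) 1, ‖P (f t) - Q (g t)‖ ≤ r}.Nonempty := by
  obtain ⟨x, -, hmax⟩ := isCompact_Icc.exists_isMaxOn (nonempty_Icc.mpr zero_le_one)
    ((hP.sub hQ).norm)
  exact ⟨‖P x - Q x‖, id, id, monotone_id.monotoneOn _, monotone_id.monotoneOn _,
    image_id _, image_id _, fun u hu => hmax hu⟩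

lemma exists_reparam {E : Type*} [SeminormedAddCommGroup E] (P : ℝ → E) {h : ℝ → ℝ} {a c : ℝ}
    (hac : a ≤ c) (hm : MonotoneOn h (Icc 0 1)) (hcont : ContinuousOn h (Icc 0 1))
    (h0 : h 0 = a) (h1 : h 1 = c) :
    ∃ f : ℝ → ℝ, MonotoneOn f (Icc 0 1) ∧ f '' Icc 0 1 = Icc 0 1 ∧
      ∀ u ∈ Icc (0:ℝ) 1, subcurve P a c (f u) = P (h u) := by
  have h0m : (0:ℝ) ∈ Icc (0:ℝ) 1 := left_mem_Icc.mpr zero_le_one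
  have h1m : (1:ℝ) ∈ Icc (0:ℝ) 1 := right_mem_Icc.mpr zero_le_one
  rcases eq_or_lt_of_le hac with heq | hlt
  · refine ⟨id, monotone_id.monotoneOn _, image_id _, ?_⟩
    intro u hu
    have hua : h u = a := le_antisymm
      (by rw [← heq] at h1; rw [← h1]; exact hm hu h1m hu.2)
      (by rw [← h0]; exact hm h0m hu hu.1)
    have he : subcurve P a c (id u) = P (a + u * (c - a)) := rfl
    rw [he, ← heq, sub_self, mul_zero, add_zero, hua]
  · have hpos : (0:ℝ) < c - a := sub_pos.mpr hlt
    have hca : c - a ≠ 0 := ne_of_gt hpos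
    refine ⟨fun u => (h u - a) / (c - a), ?_, ?_, ?_⟩
    · intro u hu v hv huv
      have hmv := hm hu hv huv
      exact div_le_div_of_nonneg_right (by linarith : h u - a ≤ h v - a) hpos.le
    · have him : h '' Icc 0 1 = Icc a c := by
        apply Subset.antisymm
        · rintro x ⟨u, hu, rfl⟩
          exact ⟨by rw [← h0]; exact hm h0m hu hu.1, by rw [← h1]; exact hm hu h1m hu.2⟩
        · have := intermediate_value_Icc zero_le_one hcont
          rwa [h0, h1] at this
      have hcomp : (fun u => (h u - a) / (c - a)) '' Icc 0 1
          = (fun x => (x - a) / (c - a)) '' (h '' Icc 0 1) := by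
        rw [← image_comp]; rfl
      rw [hcomp, him]
      ext y
      constructor
      · rintro ⟨x, hx, rfl⟩
        exact ⟨div_nonneg (by linarith [hx.1]) (le_of_lt hpos),
          (div_le_one hpos).mpr (by linarith [hx.2])⟩
      · intro hy
        refine ⟨a + y * (c - a), ⟨by nlinarith [hy.1, hy.2], by nlinarith [hy.1, hy.2]⟩, ?_⟩
        field_simp
        ring
    · intro u hu
      have he : subcurve P a c ((h u - a) / (c - a)) = P (a + (h u - a) / (c - a) * (c - a)) := rfl
      rw [he, div_mul_cancel₀ _ hca]
      have : a + (h u - a) = h u := by ring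
      rw [this]

lemma frechet_le_of_path {E : Type*} [SeminormedAddCommGroup E] (P S : ℝ → E) (r : ℝ)
    {a c b d : ℝ} (hac : a ≤ c) (hbd : b ≤ d)
    (hpath : IsMonotonePathIn (freeSpace S P r) (a, b) (c, d)) :
    frechetDist (subcurve P a c) (subcurve S b d) ≤ r := by
  obtain ⟨γ, hγc, hγ0, hγ1, hm1, hm2, hmem⟩ := hpath
  obtain ⟨f, hfm, hfi, hfe⟩ := exists_reparam P hac hm1
    (continuous_fst.comp_continuousOn hγc) (by rw [hγ0]) (by rw [hγ1])
  obtain ⟨g, hgm, hgi, hge⟩ := exists_reparam S hbd hm2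
    (continuous_snd.comp_continuousOn hγc) (by rw [hγ0]) (by rw [hγ1])
  apply csInf_le (fset_bddBelow _ _)
  refine ⟨f, g, hfm, hgm, hfi, hgi, fun u hu => ?_⟩
  rw [hfe u hu, hge u hu]
  exact (hmem u hu).2.2

lemma path_of_frechet_le {E : Type*} [SeminormedAddCommGroup E] {P S : ℝ → E}
    (hPc : ContinuousOn P (Icc 0 1)) (hSc : ContinuousOn S (Icc 0 1))
    {Δ s t b d : ℝ}
    (hs : 0 ≤ s) (hst : s ≤ t) (ht : t ≤ 1) (hb : 0 ≤ b) (hbd : b ≤ d) (hd : d ≤ 1)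
    (hF : frechetDist (subcurve P s t) (subcurve S b d) ≤ Δ) :
    IsMonotonePathIn (freeSpace S P Δ) (s, b) (t, d) := by
  classical
  have h0m : (0:ℝ) ∈ Icc (0:ℝ) 1 := left_mem_Icc.mpr zero_le_one
  have h1mm : (1:ℝ) ∈ Icc (0:ℝ) 1 := right_mem_Icc.mpr zero_le_one
  -- Step 1: approximate witnesses
  have hex : ∀ n : ℕ, ∃ f g : ℝ → ℝ,
      MonotoneOn f (Icc 0 1) ∧ MonotoneOn g (Icc 0 1) ∧
      f '' Icc 0 1 = Icc 0 1 ∧ g '' Icc 0 1 = Icc 0 1 ∧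
      ∀ u ∈ Icc (0:ℝ) 1, ‖subcurve P s t (f u) - subcurve S b d (g u)‖ ≤ Δ + 1/(n+1) := by
    intro n
    have hpos : (0:ℝ) < 1/(n+1) := by positivity
    have hlt : frechetDist (subcurve P s t) (subcurve S b d) < Δ + 1/(n+1) := by linarith
    rw [frechetDist] at hlt
    obtain ⟨r, hrK, hrlt⟩ := (csInf_lt_iff (fset_bddBelow _ _)
      (fset_nonempty (subcurve_contOn hPc hs hst ht) (subcurve_contOn hSc hb hbd hd))).mp hlt
    obtain ⟨f, g, hm1, hm2, hi1, hi2, hb5⟩ := hrK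
    exact ⟨f, g, hm1, hm2, hi1, hi2, fun u hu => (hb5 u hu).trans hrlt.le⟩
  choose F G hFm hGm hFi hGi hFG using hex
  have hFc : ∀ n, ContinuousOn (F n) (Icc 0 1) := fun n =>
    monoOn_image_continuousOn (hFm n) (hFi n)
  have hGc : ∀ n, ContinuousOn (G n) (Icc 0 1) := fun n =>
    monoOn_image_continuousOn (hGm n) (hGi n)
  have hF01 : ∀ n, F n 0 = 0 ∧ F n 1 = 1 := fun n => mono_img_endpoints (hFm n) (hFi n)
  have hG01 : ∀ n, G n 0 = 0 ∧ G n 1 = 1 := fun n => mono_img_endpoints (hGm n) (hGi n)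
  have hFr : ∀ n, ∀ u ∈ Icc (0:ℝ) 1, F n u ∈ Icc (0:ℝ) 1 := fun n u hu => by
    rw [← hFi n]; exact mem_image_of_mem _ hu
  have hGr : ∀ n, ∀ u ∈ Icc (0:ℝ) 1, G n u ∈ Icc (0:ℝ) 1 := fun n u hu => by
    rw [← hGi n]; exact mem_image_of_mem _ hu
  set h1 : ℕ → ℝ → ℝ := fun n u => s + F n u * (t - s) with hh1
  set h2 : ℕ → ℝ → ℝ := fun n u => b + G n u * (d - b) with hh2
  set w : ℝ → ℝ := fun v => (s + b) + v * ((t + d) - (s + b)) with hw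
  have hm1 : ∀ n, MonotoneOn (h1 n) (Icc 0 1) := by
    intro n u hu v hv huv
    have := hFm n hu hv huv
    simp only [hh1]
    nlinarith
  have hm2 : ∀ n, MonotoneOn (h2 n) (Icc 0 1) := by
    intro n u hu v hv huv
    have := hGm n hu hv huv
    simp only [hh2]
    nlinarith
  have hr1 : ∀ n, ∀ u ∈ Icc (0:ℝ) 1, h1 n u ∈ Icc s t := by
    intro n u hu
    obtain ⟨hl, hr⟩ := hFr n u hu
    constructor
    · simp only [hh1]; nlinarith
    · simp only [hh1]; nlinarith
  have hr2 : ∀ n, ∀ u ∈ Icc (0:ℝ) 1, h2 n u ∈ Icc b d := by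
    intro n u hu
    obtain ⟨hl, hr⟩ := hGr n u hu
    constructor
    · simp only [hh2]; nlinarith
    · simp only [hh2]; nlinarith
  -- Step 2: IVT choice
  have hUex : ∀ n : ℕ, ∀ v : ℝ, ∃ u, v ∈ Icc (0:ℝ) 1 →
      (u ∈ Icc (0:ℝ) 1 ∧ h1 n u + h2 n u = w v) := by
    intro n v
    by_cases hv : v ∈ Icc (0:ℝ) 1
    · have hφc : ContinuousOn (fun u => h1 n u + h2 n u) (Icc 0 1) := by
        apply ContinuousOn.add
        · exact continuousOn_const.add ((hFc n).mul continuousOn_const)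
        · exact continuousOn_const.add ((hGc n).mul continuousOn_const)
      have h00 : h1 n 0 + h2 n 0 = s + b := by
        simp [hh1, hh2, (hF01 n).1, (hG01 n).1]
      have h11 : h1 n 1 + h2 n 1 = t + d := by
        simp only [hh1, hh2, (hF01 n).2, (hG01 n).2, one_mul]
        ring
      have hwv : w v ∈ Icc (h1 n 0 + h2 n 0) (h1 n 1 + h2 n 1) := by
        rw [h00, h11]
        simp only [hw]
        constructor
        · nlinarith [hv.1, hv.2]
        · nlinarith [hv.1, hv.2]
      obtain ⟨u, hu, huv⟩ := intermediate_value_Icc zero_le_one hφc hwv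
      exact ⟨u, fun _ => ⟨hu, huv⟩⟩
    · exact ⟨0, fun hcon => absurd hcon hv⟩
  choose U hU using hUex
  have hlmono : ∀ n, ∀ v ∈ Icc (0:ℝ) 1, ∀ v' ∈ Icc (0:ℝ) 1, v ≤ v' →
      h1 n (U n v) ≤ h1 n (U n v') ∧ h2 n (U n v) ≤ h2 n (U n v') := by
    intro n v hv v' hv' hvv
    obtain ⟨hu, hsum⟩ := hU n v hv
    obtain ⟨hu', hsum'⟩ := hU n v' hv'
    have hwle : w v ≤ w v' := by simp only [hw]; nlinarith
    rcases le_total (U n v) (U n v') with hle | hle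
    · exact ⟨hm1 n hu hu' hle, hm2 n hu hu' hle⟩
    · have e1 := hm1 n hu' hu hle
      have e2 := hm2 n hu' hu hle
      constructor <;> linarith
  have hlip : ∀ n, ∀ v ∈ Icc (0:ℝ) 1, ∀ v' ∈ Icc (0:ℝ) 1, v ≤ v' →
      h1 n (U n v') - h1 n (U n v) ≤ 2 * (v' - v) ∧
      h2 n (U n v') - h2 n (U n v) ≤ 2 * (v' - v) := by
    intro n v hv v' hv' hvv
    obtain ⟨hu, hsum⟩ := hU n v hv
    obtain ⟨hu', hsum'⟩ := hU n v' hv'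
    obtain ⟨c1, c2⟩ := hlmono n v hv v' hv' hvv
    have hwd : w v' - w v = (v' - v) * ((t + d) - (s + b)) := by simp only [hw]; ring
    constructor <;> nlinarith
  have hend0 : ∀ n, h1 n (U n 0) = s ∧ h2 n (U n 0) = b := by
    intro n
    obtain ⟨hu, hsum⟩ := hU n 0 h0m
    have hw0 : w 0 = s + b := by simp [hw]
    rw [hw0] at hsum
    have r1 := hr1 n _ hu
    have r2 := hr2 n _ hu
    constructor <;> linarith [r1.1, r2.1]
  have hend1 : ∀ n, h1 n (U n 1) = t ∧ h2 n (U n 1) = d := by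
    intro n
    obtain ⟨hu, hsum⟩ := hU n 1 h1mm
    have hw1 : w 1 = t + d := by simp only [hw]; ring
    rw [hw1] at hsum
    have r1 := hr1 n _ hu
    have r2 := hr2 n _ hu
    constructor <;> linarith [r1.2, r2.2]
  have hbnd : ∀ n, ∀ v ∈ Icc (0:ℝ) 1, ‖P (h1 n (U n v)) - S (h2 n (U n v))‖ ≤ Δ + 1/(n+1) := by
    intro n v hv
    have hres := hFG n (U n v) (hU n v hv).1
    simpa [subcurve, hh1, hh2] using hres
  -- Step 3: ultrafilter limit
  let Uf : Ultrafilter ℕ := Ultrafilter.of atTop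
  have hUfle : (Uf : Filter ℕ) ≤ atTop := Ultrafilter.of_le _
  have hlimex : ∀ v : ℝ, ∃ p : ℝ × ℝ, v ∈ Icc (0:ℝ) 1 →
      (p.1 ∈ Icc s t ∧ p.2 ∈ Icc b d ∧
        Tendsto (fun n => h1 n (U n v)) (Uf : Filter ℕ) (𝓝 p.1) ∧
        Tendsto (fun n => h2 n (U n v)) (Uf : Filter ℕ) (𝓝 p.2)) := by
    intro v
    by_cases hv : v ∈ Icc (0:ℝ) 1
    · have hmem1 : ∀ n, h1 n (U n v) ∈ Icc s t := fun n => hr1 n _ (hU n v hv).1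
      have hmem2 : ∀ n, h2 n (U n v) ∈ Icc b d := fun n => hr2 n _ (hU n v hv).1
      have hp1 : (↑(Uf.map (fun n => h1 n (U n v))) : Filter ℝ) ≤ 𝓟 (Icc s t) := by
        rw [Ultrafilter.coe_map]
        exact le_principal_iff.mpr (mem_map.mpr (univ_mem' hmem1))
      have hp2 : (↑(Uf.map (fun n => h2 n (U n v))) : Filter ℝ) ≤ 𝓟 (Icc b d) := by
        rw [Ultrafilter.coe_map]
        exact le_principal_iff.mpr (mem_map.mpr (univ_mem' hmem2))
      obtain ⟨x, hx, hxle⟩ := (isCompact_Icc : IsCompact (Icc s t)).ultrafilter_le_nhds _ hp1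
      obtain ⟨y, hy, hyle⟩ := (isCompact_Icc : IsCompact (Icc b d)).ultrafilter_le_nhds _ hp2
      refine ⟨(x, y), fun _ => ⟨hx, hy, ?_, ?_⟩⟩
      · rwa [Ultrafilter.coe_map] at hxle
      · rwa [Ultrafilter.coe_map] at hyle
    · exact ⟨(0, 0), fun hcon => absurd hcon hv⟩
  choose γ hγ using hlimex
  have hmono1 : MonotoneOn (fun v => (γ v).1) (Icc 0 1) := by
    intro v hv v' hv' hvv
    exact le_of_tendsto_of_tendsto' ((hγ v hv).2.2.1) ((hγ v' hv').2.2.1)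
      (fun n => (hlmono n v hv v' hv' hvv).1)
  have hmono2 : MonotoneOn (fun v => (γ v).2) (Icc 0 1) := by
    intro v hv v' hv' hvv
    exact le_of_tendsto_of_tendsto' ((hγ v hv).2.2.2) ((hγ v' hv').2.2.2)
      (fun n => (hlmono n v hv v' hv' hvv).2)
  have hγ0 : γ 0 = (s, b) := by
    have hc := hγ 0 h0m
    have e1 : Tendsto (fun n => h1 n (U n 0)) (Uf : Filter ℕ) (𝓝 s) := by
      have heq : (fun n => h1 n (U n 0)) = fun _ => s := funext fun n => (hend0 n).1
      rw [heq]; exact tendsto_const_nhds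
    have e2 : Tendsto (fun n => h2 n (U n 0)) (Uf : Filter ℕ) (𝓝 b) := by
      have heq : (fun n => h2 n (U n 0)) = fun _ => b := funext fun n => (hend0 n).2
      rw [heq]; exact tendsto_const_nhds
    have q1 := tendsto_nhds_unique hc.2.2.1 e1
    have q2 := tendsto_nhds_unique hc.2.2.2 e2
    exact Prod.ext q1 q2
  have hγ1 : γ 1 = (t, d) := by
    have hc := hγ 1 h1mm
    have e1 : Tendsto (fun n => h1 n (U n 1)) (Uf : Filter ℕ) (𝓝 t) := by
      have heq : (fun n => h1 n (U n 1)) = fun _ => t := funext fun n => (hend1 n).1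
      rw [heq]; exact tendsto_const_nhds
    have e2 : Tendsto (fun n => h2 n (U n 1)) (Uf : Filter ℕ) (𝓝 d) := by
      have heq : (fun n => h2 n (U n 1)) = fun _ => d := funext fun n => (hend1 n).2
      rw [heq]; exact tendsto_const_nhds
    exact Prod.ext (tendsto_nhds_unique hc.2.2.1 e1) (tendsto_nhds_unique hc.2.2.2 e2)
  have hlipγ : ∀ v ∈ Icc (0:ℝ) 1, ∀ v' ∈ Icc (0:ℝ) 1, v ≤ v' →
      (γ v').1 - (γ v).1 ≤ 2 * (v' - v) ∧ (γ v').2 - (γ v).2 ≤ 2 * (v' - v) := by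
    intro v hv v' hv' hvv
    constructor
    · exact le_of_tendsto_of_tendsto' (((hγ v' hv').2.2.1).sub ((hγ v hv).2.2.1))
        tendsto_const_nhds (fun n => (hlip n v hv v' hv' hvv).1)
    · exact le_of_tendsto_of_tendsto' (((hγ v' hv').2.2.2).sub ((hγ v hv).2.2.2))
        tendsto_const_nhds (fun n => (hlip n v hv v' hv' hvv).2)
  have hcont : ContinuousOn γ (Icc 0 1) := by
    have hL : LipschitzOnWith 2 γ (Icc 0 1) := by
      apply LipschitzOnWith.of_dist_le_mul
      intro v hv v' hv'
      have h2c : ((2:ℝ≥0) : ℝ) = 2 := by norm_num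
      rw [h2c]
      have key : ∀ x, x ∈ Icc (0:ℝ) 1 → ∀ y, y ∈ Icc (0:ℝ) 1 → x ≤ y →
          dist (γ x) (γ y) ≤ 2 * dist x y := by
        intro x hx y hy hxy
        obtain ⟨d1, d2⟩ := hlipγ x hx y hy hxy
        have m1 := hmono1 hx hy hxy
        have m2 := hmono2 hx hy hxy
        simp only at m1 m2
        rw [Prod.dist_eq, Real.dist_eq, Real.dist_eq, Real.dist_eq]
        rw [abs_of_nonpos (by linarith : x - y ≤ 0)]
        apply max_le
        · rw [abs_of_nonpos (by linarith : (γ x).1 - (γ y).1 ≤ 0)]; linarith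
        · rw [abs_of_nonpos (by linarith : (γ x).2 - (γ y).2 ≤ 0)]; linarith
      rcases le_total v v' with hvv | hvv
      · exact key v hv v' hv' hvv
      · have hk := key v' hv' v hv hvv
        rw [dist_comm (γ v') (γ v), dist_comm v' v] at hk
        exact hk
    exact hL.continuousOn
  have hmem : ∀ v ∈ Icc (0:ℝ) 1, γ v ∈ freeSpace S P Δ := by
    intro v hv
    obtain ⟨hx, hy, hT1, hT2⟩ := hγ v hv
    have hx01 : (γ v).1 ∈ Icc (0:ℝ) 1 := ⟨hs.trans hx.1, hx.2.trans ht⟩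
    have hy01 : (γ v).2 ∈ Icc (0:ℝ) 1 := ⟨hb.trans hy.1, hy.2.trans hd⟩
    refine ⟨hx01, hy01, ?_⟩
    have hmem1 : ∀ n, h1 n (U n v) ∈ Icc (0:ℝ) 1 := fun n =>
      ⟨hs.trans (hr1 n _ (hU n v hv).1).1, (hr1 n _ (hU n v hv).1).2.trans ht⟩
    have hmem2 : ∀ n, h2 n (U n v) ∈ Icc (0:ℝ) 1 := fun n =>
      ⟨hb.trans (hr2 n _ (hU n v hv).1).1, (hr2 n _ (hU n v hv).1).2.trans hd⟩
    have hTP : Tendsto (fun n => P (h1 n (U n v))) (Uf : Filter ℕ) (𝓝 (P (γ v).1)) := by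
      apply Filter.Tendsto.comp (hPc _ hx01)
      exact tendsto_nhdsWithin_of_tendsto_nhds_of_eventually_within _ hT1
        (Eventually.of_forall hmem1)
    have hTS : Tendsto (fun n => S (h2 n (U n v))) (Uf : Filter ℕ) (𝓝 (S (γ v).2)) := by
      apply Filter.Tendsto.comp (hSc _ hy01)
      exact tendsto_nhdsWithin_of_tendsto_nhds_of_eventually_within _ hT2
        (Eventually.of_forall hmem2)
    have hTn : Tendsto (fun n => ‖P (h1 n (U n v)) - S (h2 n (U n v))‖) (Uf : Filter ℕ)
        (𝓝 ‖P (γ v).1 - S (γ v).2‖) := (hTP.sub hTS).norm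
    have hTb : Tendsto (fun n : ℕ => Δ + 1/((n:ℝ)+1)) (Uf : Filter ℕ) (𝓝 Δ) := by
      have hz := (tendsto_one_div_add_atTop_nhds_zero_nat (𝕜 := ℝ)).mono_left hUfle
      have hadd := Filter.Tendsto.add (tendsto_const_nhds : Tendsto (fun _ : ℕ => Δ) (Uf : Filter ℕ) (𝓝 Δ)) hz
      simpa using hadd
    exact le_of_tendsto_of_tendsto' hTn hTb (fun n => hbnd n v hv)
  exact ⟨γ, hcont, hγ0, hγ1, hmono1, hmono2, hmem⟩

/-- If `D_Δ(S,P) ⊆ A ⊆ D_{αΔ}(S,P)`, then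
`Cov_P(S[b,d], Δ) ⊆ Cov_A(S[b,d]) ⊆ Cov_P(S[b,d], αΔ)`. -/
theorem stmt_6 {E : Type*} [SeminormedAddCommGroup E] [NormedSpace ℝ E]
    (P S : ℝ → E) (n m : ℕ) (hP : IsPolygonal P n) (hS : IsPolygonal S m)
    (Δ α : ℝ) (hΔ : 0 ≤ Δ) (hα : 1 ≤ α)
    (A : Set (ℝ × ℝ)) (hA₁ : freeSpace S P Δ ⊆ A) (hA₂ : A ⊆ freeSpace S P (α * Δ))
    (b d : ℝ) (hb : 0 ≤ b) (hbd : b ≤ d) (hd : d ≤ 1) :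
    Cov P (subcurve S b d) Δ ⊆ CovA A b d ∧
      CovA A b d ⊆ Cov P (subcurve S b d) (α * Δ) := by
  constructor
  · intro x hx
    simp only [Cov, mem_iUnion] at hx
    obtain ⟨s, t, hs0, hst, ht1, hfd, hxst⟩ := hx
    obtain ⟨γ, hcγ, h0γ, h1γ, hmγ1, hmγ2, hmem⟩ :=
      path_of_frechet_le hP.continuousOn hS.continuousOn hs0 hst ht1 hb hbd hd hfd
    simp only [CovA, mem_iUnion]
    exact ⟨s, t, hst, ⟨γ, hcγ, h0γ, h1γ, hmγ1, hmγ2, fun u hu => hA₁ (hmem u hu)⟩, hxst⟩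
  · intro x hx
    simp only [CovA, mem_iUnion] at hx
    obtain ⟨a, c, hac, hpath, hxac⟩ := hx
    obtain ⟨γ, hcγ, h0γ, h1γ, hmγ1, hmγ2, hmem⟩ := hpath
    have hmem' : ∀ u ∈ Icc (0:ℝ) 1, γ u ∈ freeSpace S P (α * Δ) := fun u hu => hA₂ (hmem u hu)
    have ha0 : 0 ≤ a := by
      have hmm := hmem' 0 (left_mem_Icc.mpr zero_le_one)
      rw [h0γ] at hmm
      exact hmm.1.1
    have hc1 : c ≤ 1 := by
      have hmm := hmem' 1 (right_mem_Icc.mpr zero_le_one)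
      rw [h1γ] at hmm
      exact hmm.1.2
    have hfd := frechet_le_of_path P S (α * Δ) hac hbd
      ⟨γ, hcγ, h0γ, h1γ, hmγ1, hmγ2, hmem'⟩
    simp only [Cov, mem_iUnion]
    exact ⟨a, c, ha0, hac, hc1, hfd, hxac⟩
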